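/- Let P ∈ ℝ^{n×m} have nonnegative entries, set a = P·1_m and b = Pᵀ·1_n, and assume a_i > 0 for all i. Then the Schur complement S := diag(b) − Pᵀ·diag(a)⁻¹·P ∈ ℝ^{m×m} is symmetric positive semidefinite and satisfies S·1_m = 0. -/

import Mathlib

open scoped Matrix

/-- The Schur complement `S = diag(b) − Pᵀ diag(a)⁻¹ P`, built from a
nonnegative coupling `P` with marginals `a = P·1 > 0` and `b = Pᵀ·1`,
is symmetric positive semidefinite and satisfies `S·1_m = 0`. -/
theorem schur_complement_psd
    (n m : ℕ)
    (P : Matrix (Fin n) (Fin m) ℝ) (hP : ∀ i j, 0 ≤ P i j)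
    (a : Fin n → ℝ) (ha : a = P.mulVec (fun _ => (1 : ℝ)))
    (hapos : ∀ i, 0 < a i)
    (b : Fin m → ℝ) (hb : b = P.transpose.mulVec (fun _ => (1 : ℝ)))
    (S : Matrix (Fin m) (Fin m) ℝ)
    (hS : S = Matrix.diagonal b
        - P.transpose * Matrix.diagonal (fun i => (a i)⁻¹) * P) :
    S.PosSemidef ∧ S.mulVec (fun _ => (1 : ℝ)) = 0 := by
  have haeq : ∀ i, a i = ∑ j, P i j := by
    intro i; rw [ha]; simp [Matrix.mulVec, dotProduct]
  have hbeq : ∀ j, b j = ∑ i, P i j := by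
    intro j; rw [hb]; simp [Matrix.mulVec, dotProduct, Matrix.transpose]
  constructor
  · rw [Matrix.posSemidef_iff_dotProduct_mulVec]
    constructor
    · -- Hermitian
      rw [hS]
      refine Matrix.IsHermitian.sub (Matrix.isHermitian_diagonal b) ?_
      rw [show P.transpose = P.conjTranspose from (Matrix.conjTranspose_eq_transpose_of_trivial P).symm]
      exact Matrix.isHermitian_conjTranspose_mul_mul P (Matrix.isHermitian_diagonal _)
    · intro x
      simp only [star_trivial]
      have hq : x ⬝ᵥ S.mulVec x
          = (∑ j, b j * x j ^ 2) - ∑ i, (a i)⁻¹ * (P.mulVec x i) ^ 2 := by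
        rw [hS, Matrix.sub_mulVec, dotProduct_sub]
        congr 1
        · simp only [dotProduct, Matrix.mulVec_diagonal]
          exact Finset.sum_congr rfl fun j _ => by ring
        · rw [← Matrix.mulVec_mulVec, ← Matrix.mulVec_mulVec, Matrix.dotProduct_mulVec,
            Matrix.vecMul_transpose]
          simp only [dotProduct, Matrix.mulVec_diagonal]
          exact Finset.sum_congr rfl fun i _ => by ring
      rw [hq, sub_nonneg]
      have key : ∀ i, (a i)⁻¹ * (P.mulVec x i) ^ 2 ≤ ∑ j, P i j * x j ^ 2 := by
        intro i
        have hmv : P.mulVec x i = ∑ j, P i j * x j := by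
          simp [Matrix.mulVec, dotProduct]
        rw [inv_mul_le_iff₀ (hapos i), haeq i, hmv]
        apply Finset.sum_sq_le_sum_mul_sum_of_sq_eq_mul
        · intro j _; exact hP i j
        · intro j _; exact mul_nonneg (hP i j) (sq_nonneg _)
        · intro j _; ring
      calc ∑ i, (a i)⁻¹ * (P.mulVec x i) ^ 2
          ≤ ∑ i, ∑ j, P i j * x j ^ 2 := Finset.sum_le_sum fun i _ => key i
        _ = ∑ j, b j * x j ^ 2 := by
            rw [Finset.sum_comm]
            exact Finset.sum_congr rfl fun j _ => by rw [hbeq j, Finset.sum_mul]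
  · rw [hS, Matrix.sub_mulVec, ← Matrix.mulVec_mulVec, ← Matrix.mulVec_mulVec, ← ha]
    have h2 : Matrix.diagonal (fun i => (a i)⁻¹) *ᵥ a = fun _ => (1 : ℝ) := by
      funext i
      simp [Matrix.mulVec_diagonal, inv_mul_cancel₀ (hapos i).ne']
    rw [h2, ← hb]
    have h3 : Matrix.diagonal b *ᵥ (fun _ => (1 : ℝ)) = b := by
      funext j; simp [Matrix.mulVec_diagonal]
    rw [h3, sub_self]
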